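/- Let M, a, s be positive integers with M > 1 such that ∑_{i=0}^{M-1} (a+i)^2 = s^2, and suppose M = 24·m₁ + 1 for a positive integer m₁. Then for every prime p > 3 with p ≢ 1 (mod 12) and p ≢ 11 (mod 12), there do not exist integers i ≥ 0 and q ≥ 1 with p ∤ q such that 24·m₁ + 1 = p^(2i+1)·q; equivalently, the exact power of p dividing M is even. -/

import Mathlib

lemma sum_sq_int (a : ℤ) : ∀ n : ℕ,
    6 * ∑ i ∈ Finset.range n, (a + i) ^ 2
      = n * (6 * a ^ 2 + 6 * a * (n - 1) + (n - 1) * (2 * n - 1)) := by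
  intro n
  induction n with
  | zero => simp
  | succ n ih =>
    rw [Finset.sum_range_succ, mul_add, ih]
    push_cast
    ring

lemma not_sq_two_mod_three : ¬ IsSquare (2 : ZMod 3) := by decide

lemma three_not_square {p : ℕ} (hp : p.Prime) (hpgt : 3 < p)
    (h1 : p % 12 ≠ 1) (h11 : p % 12 ≠ 11) : ¬ IsSquare (3 : ZMod p) := by
  intro hsq
  haveI : Fact p.Prime := ⟨hp⟩
  haveI : Fact (Nat.Prime 3) := ⟨by norm_num⟩
  have h2 : p % 2 = 1 := hp.eq_two_or_odd.resolve_left (by omega)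
  have h3 : ¬ (3 ∣ p) := fun h =>
    (by omega : p ≠ 3) ((Nat.prime_dvd_prime_iff_eq (by norm_num) hp).mp h).symm
  have h57 : p % 12 = 5 ∨ p % 12 = 7 := by omega
  have hcast : ((3 : ℕ) : ZMod p) = (3 : ZMod p) := by norm_cast
  rcases h57 with h | h
  · have h4 : p % 4 = 1 := by omega
    have := (ZMod.exists_sq_eq_prime_iff_of_mod_four_eq_one (q := 3) h4 (by norm_num)).mp
      (hcast ▸ hsq)
    rw [show ((p : ZMod 3)) = ((p % 3 : ℕ) : ZMod 3) from (ZMod.natCast_mod p 3).symm,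
      show p % 3 = 2 by omega] at this
    norm_num at this
    exact not_sq_two_mod_three this
  · have h4 : p % 4 = 3 := by omega
    have := (ZMod.exists_sq_eq_prime_iff_of_mod_four_eq_three (q := 3) h4 (by norm_num)
      (by omega)).mp (hcast ▸ hsq)
    apply this
    rw [show ((p : ZMod 3)) = ((p % 3 : ℕ) : ZMod 3) from (ZMod.natCast_mod p 3).symm,
      show p % 3 = 1 by omega]
    norm_num

theorem stmt (M a s m₁ : ℕ) (hM : 1 < M) (ha : 1 ≤ a) (hs : 1 ≤ s)
    (hsum : ∑ i ∈ Finset.range M, (a + i) ^ 2 = s ^ 2)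
    (hm : 1 ≤ m₁) (hMeq : M = 24 * m₁ + 1) :
    ∀ p : ℕ, p.Prime → 3 < p → p % 12 ≠ 1 → p % 12 ≠ 11 →
      ¬ ∃ i q : ℕ, 1 ≤ q ∧ ¬ p ∣ q ∧ 24 * m₁ + 1 = p ^ (2 * i + 1) * q := by
  intro p hp hpgt h1 h11
  rintro ⟨i, q, hq1, hpq, heq⟩
  haveI : Fact p.Prime := ⟨hp⟩
  set K := 6 * a ^ 2 + 144 * a * m₁ + 24 * m₁ * (48 * m₁ + 1) with hK
  have hkey : 6 * s ^ 2 = M * K := by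
    have h2 : (∑ i ∈ Finset.range M, ((a : ℤ) + i) ^ 2) = (s : ℤ) ^ 2 := by
      exact_mod_cast hsum
    have h3 : (6 * s ^ 2 : ℤ) = (M : ℤ) * (K : ℕ) := by
      rw [← h2, sum_sq_int, hK, hMeq]; push_cast; ring
    exact_mod_cast h3
  have hs0 : s ≠ 0 := by omega
  have hM0 : M ≠ 0 := by omega
  have hq0 : q ≠ 0 := by omega
  have hK0 : K ≠ 0 := by
    rw [hK]; intro h
    exact absurd (Nat.eq_zero_of_add_eq_zero_left h) (Nat.mul_ne_zero (by omega) (by omega))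
  have hpd6 : ¬ p ∣ 6 := by
    intro h
    rcases (Nat.Prime.dvd_mul hp).mp (by simpa using h : p ∣ 2 * 3) with h' | h' <;>
      exact absurd (Nat.le_of_dvd (by norm_num) h') (by omega)
  have hMfac : M.factorization p = 2 * i + 1 := by
    rw [hMeq, heq, Nat.factorization_mul (pow_ne_zero _ hp.pos.ne') hq0]
    simp [Nat.factorization_pow, Nat.Prime.factorization_self hp, Nat.factorization_eq_zero_of_not_dvd hpq]
  have efac : (6 * s ^ 2).factorization p = (M * K).factorization p := by rw [hkey]
  rw [Nat.factorization_mul (by norm_num) (pow_ne_zero _ hs0),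
    Nat.factorization_mul hM0 hK0, Nat.factorization_pow] at efac
  simp [Nat.factorization_eq_zero_of_not_dvd hpd6, hMfac] at efac
  have hdvdK : p ∣ K := by
    refine (Nat.Prime.dvd_iff_one_le_factorization hp hK0).mpr ?_
    omega
  have hpM : ((24 * m₁ + 1 : ℕ) : ZMod p) = 0 := by
    rw [heq]; push_cast; simp
  have hpK : ((K : ℕ) : ZMod p) = 0 := (ZMod.natCast_eq_zero_iff K p).mpr hdvdK
  rw [hK] at hpK
  push_cast at hpM hpK
  refine absurd ⟨6 * (a : ZMod p) - 3, ?_⟩ (three_not_square hp hpgt h1 h11)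
  linear_combination (36 * (a : ZMod p) + 288 * (m₁ : ZMod p) - 6) * hpM - 6 * hpK
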